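/- Let g, f ∈ ℝ[[x]] with constant term of g positive, constant term of f equal to 0, and coefficient of x in f positive (so the Riordan matrix R = (g, f), whose (i,j) entry is the coefficient of x^i in g·f^j, has positive main diagonal entries). Then the following are equivalent: (1) there exist h, l ∈ ℝ[[x]] with constant term of h nonzero, constant term of l zero and coefficient of x in l nonzero, such that for all i, j ∈ ℕ the coefficient of x^i in h·l^j equals the coefficient of x^i in g·f^j plus (1 if i = j, else 0) (i.e. R + I is a Riordan matrix); (2) f = x. -/

import Mathlib

open PowerSeries Finset

/-- Let `R = (g, f)` be a Riordan matrix with positive main diagonal entries. Then `R + I`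
is a Riordan matrix if and only if `f = x`. -/
theorem stmt_17 (g f : PowerSeries ℝ)
    (hg : 0 < PowerSeries.constantCoeff g)
    (hf0 : PowerSeries.constantCoeff f = 0)
    (hf1 : 0 < PowerSeries.coeff 1 f) :
    (∃ h l : PowerSeries ℝ,
        PowerSeries.constantCoeff h ≠ 0 ∧
        PowerSeries.constantCoeff l = 0 ∧
        PowerSeries.coeff 1 l ≠ 0 ∧
        ∀ i j : ℕ,
          PowerSeries.coeff i (h * l ^ j) =
            PowerSeries.coeff i (g * f ^ j) + if i = j then 1 else 0) ↔
      f = PowerSeries.X := by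
  constructor
  · rintro ⟨h, l, hh0, hl0, hl1, hcoef⟩
    have key : ∀ j : ℕ, h * l ^ j = g * f ^ j + X ^ j := by
      intro j
      ext i
      rw [map_add, hcoef i j, PowerSeries.coeff_X_pow]
    have h0 : h = g + 1 := by simpa using key 0
    have h1 : h * l = g * f + X := by simpa using key 1
    have h2 : h * l ^ 2 = g * f ^ 2 + X ^ 2 := key 2
    have hgne : g ≠ 0 := by
      intro hgz; rw [hgz] at hg; simp at hg
    have hz : g * (f - X) ^ 2 = 0 := by
      have e : (g * f + X) ^ 2 = (g + 1) * (g * f ^ 2 + X ^ 2) := by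
        calc (g * f + X) ^ 2 = (h * l) ^ 2 := by rw [h1]
          _ = h * (h * l ^ 2) := by ring
          _ = (g + 1) * (g * f ^ 2 + X ^ 2) := by rw [h2, h0]
      linear_combination -e
    have hsq : (f - X) ^ 2 = 0 := by
      rcases mul_eq_zero.mp hz with h' | h'
      · exact absurd h' hgne
      · exact h'
    have : f - X = 0 := pow_eq_zero_iff (two_ne_zero) |>.mp hsq
    exact sub_eq_zero.mp this
  · rintro rfl
    refine ⟨g + 1, X, ?_, ?_, ?_, ?_⟩
    · simp only [map_add, map_one]
      intro hc; rw [PowerSeries.constantCoeff_X] at *; linarith [hc]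
    · simp
    · simp
    · intro i j
      rw [add_mul, one_mul, map_add, PowerSeries.coeff_X_pow]
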